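/- Let ν = (439/18144)^{1/4}, s = 9ν²/2, and c₆ = 1/3 + (2/3)·√(s + 1/4) + 0.001 (so that 1/2 < c₆ < 1). Then there exists a constant c₇ > 0 such that for every integer N ≥ 1, 8N · ( ∑_{n≥N} (2/3)^n ∑_{r=1}^{⌊n/2⌋} C(n−r−1, r−1)·s^r + 7·∑_{n≥N−1} (2/3)^n ∑_{r=1}^{⌊n/2⌋} C(n−r−1, r−1)·s^r + 12·∑_{n≥N−2} (2/3)^n ∑_{r=1}^{⌊n/2⌋} C(n−r−1, r−1)·s^r ) ≤ c₇·N²·c₆^N. -/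
import Mathlib


/-- The paper's constant `s = 9ν²/2` with `ν = (439/18144)^{1/4}`. -/
noncomputable def sPaper : ℝ := 9 * ((439 / 18144 : ℝ) ^ ((1 : ℝ) / 4)) ^ 2 / 2

/-- The constant `c₆ = 1/3 + (2/3)√(s + 1/4) + 0.001`. -/
noncomputable def cSix : ℝ := 1 / 3 + 2 / 3 * Real.sqrt (sPaper + 1 / 4) + 0.001

/-- The total entropy–energy weight of dual lattice paths with `n` edges:
`(2/3)^n ∑_{r=1}^{⌊n/2⌋} C(n−r−1, r−1) s^r`. -/
noncomputable def pathWeight (n : ℕ) : ℝ :=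
  (2 / 3 : ℝ) ^ n *
    ∑ r ∈ Finset.Icc 1 (n / 2), (Nat.choose (n - r - 1) (r - 1) : ℝ) * sPaper ^ r

/-- The tail sum `∑_{n ≥ M} (2/3)^n ∑_{r=1}^{⌊n/2⌋} C(n−r−1, r−1) s^r`. -/
noncomputable def tailWeight (M : ℕ) : ℝ := ∑' k : ℕ, pathWeight (M + k)

/- ## Auxiliary lemmas -/

lemma choose_bound (m k : ℕ) (hk : k ≤ m) (x : ℝ) (hx : 0 ≤ x) :
    (Nat.choose m k : ℝ) * x ^ k ≤ (x + 1) ^ m := by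
  rw [add_pow]
  have hmem : k ∈ Finset.range (m+1) := Finset.mem_range.2 (Nat.lt_succ_of_le hk)
  calc (Nat.choose m k : ℝ) * x ^ k = x ^ k * 1 ^ (m - k) * (Nat.choose m k : ℝ) := by ring
    _ ≤ ∑ i ∈ Finset.range (m+1), x ^ i * 1 ^ (m - i) * (Nat.choose m i : ℝ) := by
        apply Finset.single_le_sum (fun i _ => by positivity) hmem

/-- The growth rate `λ = 1/2 + √(s + 1/4)`, root of `λ² = λ + s`. -/
noncomputable def LL : ℝ := 1/2 + Real.sqrt (sPaper + 1/4)

lemma sPaper_pos' : 0 < sPaper := by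
  have : (0:ℝ) < (439 / 18144 : ℝ) ^ ((1 : ℝ) / 4) := Real.rpow_pos_of_pos (by norm_num) _
  unfold sPaper; positivity

lemma LL_sq : LL ^ 2 = LL + sPaper := by
  have h0 : (0:ℝ) ≤ sPaper + 1/4 := by linarith [sPaper_pos']
  have hsq : Real.sqrt (sPaper + 1/4) ^ 2 = sPaper + 1/4 := Real.sq_sqrt h0
  unfold LL; nlinarith

lemma LL_gt_one : 1 < LL := by
  have h0 : (0:ℝ) ≤ sPaper + 1/4 := by linarith [sPaper_pos']
  have hsq : Real.sqrt (sPaper + 1/4) ^ 2 = sPaper + 1/4 := Real.sq_sqrt h0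
  have hnn : 0 ≤ Real.sqrt (sPaper + 1/4) := Real.sqrt_nonneg _
  have : 1/2 < Real.sqrt (sPaper + 1/4) := by nlinarith [sPaper_pos']
  unfold LL; linarith

lemma term_bound (n r : ℕ) (h1 : 1 ≤ r) (h2 : r ≤ n / 2) :
    (Nat.choose (n - r - 1) (r - 1) : ℝ) * sPaper ^ r ≤ sPaper * LL ^ (n - 2) := by
  have h2' : 2 * r ≤ n := by omega
  have hk : r - 1 ≤ n - r - 1 := by omega
  have hL1 : (0:ℝ) ≤ LL - 1 := by linarith [LL_gt_one]
  have hs : sPaper = LL * (LL - 1) := by nlinarith [LL_sq]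
  have hcb := choose_bound (n - r - 1) (r - 1) hk (LL - 1) hL1
  rw [sub_add_cancel] at hcb
  have hsplit : sPaper ^ r = sPaper * (LL ^ (r-1) * (LL - 1) ^ (r-1)) := by
    calc sPaper ^ r = sPaper * sPaper ^ (r-1) := by
          rw [← pow_succ']; congr 1; omega
      _ = sPaper * (LL ^ (r-1) * (LL - 1) ^ (r-1)) := by rw [hs, ← mul_pow, ← hs]
  have hLpos : (0:ℝ) < LL := by linarith [LL_gt_one]
  have hspos := sPaper_pos'
  calc (Nat.choose (n - r - 1) (r - 1) : ℝ) * sPaper ^ r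
      = ((Nat.choose (n - r - 1) (r - 1) : ℝ) * (LL-1)^(r-1)) * (sPaper * LL ^ (r-1)) := by
        rw [hsplit]; ring
    _ ≤ LL ^ (n - r - 1) * (sPaper * LL ^ (r-1)) := by
        apply mul_le_mul_of_nonneg_right hcb; positivity
    _ = sPaper * LL ^ (n - 2) := by
        rw [show n - 2 = (n - r - 1) + (r - 1) by omega, pow_add]; ring

lemma sPaper_sq' : sPaper ^ 2 = 81 * (439/18144) / 4 := by
  have hx : (0:ℝ) ≤ 439/18144 := by norm_num
  have h4 : (((439 / 18144 : ℝ) ^ ((1 : ℝ) / 4)) ^ 2) ^ 2 = (439/18144 : ℝ) := by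
    rw [← Real.rpow_natCast ((439 / 18144 : ℝ) ^ ((1 : ℝ) / 4)) 2,
        ← Real.rpow_mul hx, ← Real.rpow_natCast _ 2, ← Real.rpow_mul hx]
    norm_num
  unfold sPaper; field_simp; nlinarith [h4]

lemma sPaper_le' : sPaper ≤ 0.7 := by nlinarith [sPaper_sq', sPaper_pos']

lemma LL_le : LL ≤ 1.475 := by
  have h0 : (0:ℝ) ≤ sPaper + 1/4 := by linarith [sPaper_pos']
  have hsq : Real.sqrt (sPaper + 1/4) ^ 2 = sPaper + 1/4 := Real.sq_sqrt h0
  have hnn : 0 ≤ Real.sqrt (sPaper + 1/4) := Real.sqrt_nonneg _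
  have : Real.sqrt (sPaper + 1/4) ≤ 0.975 := by nlinarith [sPaper_le']
  unfold LL; linarith

lemma cSix_eq : cSix = 2/3 * LL + 0.001 := by unfold cSix LL; ring

lemma cSix_lt_one : cSix < 1 := by rw [cSix_eq]; nlinarith [LL_le]
lemma cSix_ge : 2/3 ≤ cSix := by rw [cSix_eq]; nlinarith [LL_gt_one]
lemma cSix_pos : 0 < cSix := lt_of_lt_of_le (by norm_num) cSix_ge

lemma pathWeight_nonneg (n : ℕ) : 0 ≤ pathWeight n := by
  unfold pathWeight
  apply mul_nonneg (by positivity)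
  apply Finset.sum_nonneg
  intro r _
  have := sPaper_pos'
  positivity

lemma pathWeight_le (n : ℕ) : pathWeight n ≤ (n : ℝ) * (2/3 * LL) ^ n := by
  have hLpos : (0:ℝ) < LL := by linarith [LL_gt_one]
  have hsum : ∑ r ∈ Finset.Icc 1 (n / 2), (Nat.choose (n - r - 1) (r - 1) : ℝ) * sPaper ^ r
      ≤ (n : ℝ) * LL ^ n := by
    calc ∑ r ∈ Finset.Icc 1 (n / 2), (Nat.choose (n - r - 1) (r - 1) : ℝ) * sPaper ^ r
        ≤ ∑ r ∈ Finset.Icc 1 (n / 2), sPaper * LL ^ (n - 2) := by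
          apply Finset.sum_le_sum
          intro r hr
          obtain ⟨h1, h2⟩ := Finset.mem_Icc.1 hr
          exact term_bound n r h1 h2
      _ = (Finset.Icc 1 (n / 2)).card * (sPaper * LL ^ (n - 2)) := by
          rw [Finset.sum_const, nsmul_eq_mul]
      _ ≤ (n : ℝ) * LL ^ n := by
          have hcard : ((Finset.Icc 1 (n / 2)).card : ℝ) ≤ (n : ℝ) := by
            rw [Nat.card_Icc]
            exact_mod_cast Nat.le_of_lt_succ (by omega : n / 2 + 1 - 1 < n + 1)
          have hpow : LL ^ (n - 2) ≤ LL ^ n :=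
            pow_le_pow_right₀ (le_of_lt LL_gt_one) (by omega)
          have h1 : sPaper * LL ^ (n - 2) ≤ 1 * LL ^ n := by
            apply mul_le_mul (by linarith [sPaper_le']) hpow (pow_nonneg hLpos.le _) (by norm_num)
          rw [one_mul] at h1
          apply mul_le_mul hcard h1 (mul_nonneg sPaper_pos'.le (pow_nonneg hLpos.le _))
            (Nat.cast_nonneg n)
  unfold pathWeight
  rw [mul_pow]
  calc (2/3 : ℝ) ^ n * ∑ r ∈ Finset.Icc 1 (n / 2), (Nat.choose (n - r - 1) (r - 1) : ℝ) * sPaper ^ r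
      ≤ (2/3 : ℝ) ^ n * ((n:ℝ) * LL ^ n) := by
        apply mul_le_mul_of_nonneg_left hsum (by positivity)
    _ = (n : ℝ) * ((2/3:ℝ) ^ n * LL ^ n) := by ring

lemma pathWeight_le' (n : ℕ) : pathWeight n ≤ 999 * cSix ^ n := by
  have hLpos : (0:ℝ) < LL := by linarith [LL_gt_one]
  have hq : 2/3 * LL ≤ 0.999 * cSix := by rw [cSix_eq]; nlinarith [LL_le]
  have hcpos := cSix_pos
  have hqnn : (0:ℝ) ≤ 2/3 * LL := by positivity
  have hn999 : (n : ℝ) * (999/1000 : ℝ) ^ n ≤ 999 := by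
    have hber : 1 + (n : ℝ) * (1/999) ≤ (1 + 1/999) ^ n :=
      one_add_mul_le_pow (by norm_num) n
    have h1 : ((1:ℝ) + 1/999) = 1000/999 := by norm_num
    rw [h1] at hber
    have hppos : (0:ℝ) < (999/1000 : ℝ) ^ n := by positivity
    have key : (n : ℝ) ≤ 999 * (1000/999 : ℝ) ^ n := by nlinarith
    have hmul : ((1000/999 : ℝ) ^ n) * ((999/1000 : ℝ) ^ n) = 1 := by
      rw [← mul_pow]; norm_num
    nlinarith
  calc pathWeight n ≤ (n : ℝ) * (2/3 * LL) ^ n := pathWeight_le n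
    _ ≤ (n : ℝ) * (0.999 * cSix) ^ n := by
        apply mul_le_mul_of_nonneg_left (pow_le_pow_left₀ hqnn hq n) (Nat.cast_nonneg n)
    _ = ((n : ℝ) * (999/1000 : ℝ) ^ n) * cSix ^ n := by
        rw [show (0.999 : ℝ) = 999/1000 by norm_num, mul_pow]; ring
    _ ≤ 999 * cSix ^ n := by
        apply mul_le_mul_of_nonneg_right hn999 (by positivity)

lemma tail_le (M : ℕ) : tailWeight M ≤ 999 / (1 - cSix) * cSix ^ M := by
  have hc0 := cSix_pos
  have hc1 := cSix_lt_one
  have hgsum : Summable (fun k : ℕ => cSix ^ k) :=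
    summable_geometric_of_lt_one hc0.le hc1
  have hS : Summable (fun k : ℕ => 999 * cSix ^ M * cSix ^ k) := hgsum.mul_left _
  have hle : ∀ k : ℕ, pathWeight (M + k) ≤ 999 * cSix ^ M * cSix ^ k := by
    intro k
    calc pathWeight (M + k) ≤ 999 * cSix ^ (M + k) := pathWeight_le' _
      _ = 999 * cSix ^ M * cSix ^ k := by rw [pow_add]; ring
  have hsum : Summable (fun k : ℕ => pathWeight (M + k)) :=
    Summable.of_nonneg_of_le (fun k => pathWeight_nonneg _) hle hS
  calc tailWeight M ≤ ∑' k : ℕ, (999 * cSix ^ M * cSix ^ k) :=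
        Summable.tsum_le_tsum hle hsum hS
    _ = 999 * cSix ^ M * (1 - cSix)⁻¹ := by
        rw [tsum_mul_left, tsum_geometric_of_lt_one hc0.le hc1]
    _ = 999 / (1 - cSix) * cSix ^ M := by ring

lemma exp_shift (N e : ℕ) (he : N - 2 ≤ e) : cSix ^ e ≤ 9/4 * cSix ^ N := by
  have hc0 := cSix_pos
  have hc1 := cSix_lt_one
  have h1 : cSix ^ e ≤ cSix ^ (N - 2) := pow_le_pow_of_le_one hc0.le hc1.le he
  have h2 : cSix ^ (N - 2) ≤ 9/4 * cSix ^ N := by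
    have hNe : N = (N - 2) + (N - (N - 2)) := by omega
    have hk2 : N - (N - 2) ≤ 2 := by omega
    have hk : cSix ^ 2 ≤ cSix ^ (N - (N - 2)) := pow_le_pow_of_le_one hc0.le hc1.le hk2
    have hsq : (4:ℝ)/9 ≤ cSix ^ 2 := by nlinarith [cSix_ge]
    have : cSix ^ N = cSix ^ (N - 2) * cSix ^ (N - (N - 2)) := by
      rw [← pow_add, ← hNe]
    nlinarith [pow_nonneg hc0.le (N - 2)]
  linarith

/-- Quantitative conclusion of the triggering lemma at `ρ₃ = t = 1`:
`8N (T_N + 7 T_{N−1} + 12 T_{N−2}) ≤ c₇ N² c₆^N`, where `T_M` is the tail sum of path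
weights starting at `max(M,1)`. -/
theorem stmt_16 :
    ∃ c₇ : ℝ, 0 < c₇ ∧ ∀ N : ℕ, 1 ≤ N →
      8 * (N : ℝ) *
          (tailWeight N + 7 * tailWeight (max (N - 1) 1) + 12 * tailWeight (max (N - 2) 1)) ≤
        c₇ * (N : ℝ) ^ 2 * cSix ^ N := by
  have hc0 := cSix_pos
  have hc1 := cSix_lt_one
  have hD : (0:ℝ) < 999 / (1 - cSix) := by
    apply div_pos (by norm_num); linarith
  refine ⟨360 * (999 / (1 - cSix)) * (9/4), by positivity, fun N hN => ?_⟩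
  have hNpos : (1:ℝ) ≤ (N:ℝ) := by exact_mod_cast hN
  set D := 999 / (1 - cSix) with hDdef
  have hB : ∀ M : ℕ, N - 2 ≤ M → tailWeight M ≤ D * (9/4 * cSix ^ N) := by
    intro M hM
    calc tailWeight M ≤ D * cSix ^ M := tail_le M
      _ ≤ D * (9/4 * cSix ^ N) :=
        mul_le_mul_of_nonneg_left (exp_shift N M hM) hD.le
  have h1 : tailWeight N ≤ D * (9/4 * cSix ^ N) := hB N (by omega)
  have h2 : tailWeight (max (N-1) 1) ≤ D * (9/4 * cSix ^ N) := hB _ (by omega)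
  have h3 : tailWeight (max (N-2) 1) ≤ D * (9/4 * cSix ^ N) := hB _ (by omega)
  have hpow : (0:ℝ) ≤ cSix ^ N := pow_nonneg hc0.le N
  have hNN : (N:ℝ) ≤ (N:ℝ)^2 := by nlinarith
  set E := D * (9/4 * cSix ^ N) with hEdef
  have hE : 0 ≤ E := by
    apply mul_nonneg hD.le; positivity
  have hsum : tailWeight N + 7 * tailWeight (max (N-1) 1) + 12 * tailWeight (max (N-2) 1)
      ≤ 20 * E := by linarith
  have hstep : 8 * (N:ℝ) *
      (tailWeight N + 7 * tailWeight (max (N-1) 1) + 12 * tailWeight (max (N-2) 1))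
      ≤ 8 * (N:ℝ) * (20 * E) := by
    apply mul_le_mul_of_nonneg_left hsum (by positivity)
  have hfin : 8 * (N:ℝ) * (20 * E) ≤ 360 * D * (9/4) * (N:ℝ)^2 * cSix ^ N := by
    have h360 : 360 * D * (9/4) * (N:ℝ)^2 * cSix ^ N = 360 * (N:ℝ)^2 * E := by
      rw [hEdef]; ring
    rw [h360]
    nlinarith [mul_nonneg hE (by nlinarith : (0:ℝ) ≤ 360 * (N:ℝ)^2 - 160 * (N:ℝ))]
  linarith
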